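/- arXiv:1901.02516 — 6 statements merged into one kernel-verified Lean document; each statement's English description precedes it below -/
import Mathlib

section
/- Let M be a unital C*-algebra with a faithful tracial state τ, let D be a C*-subalgebra of M containing the unit, let A be a unital subalgebra of M containing D, and let Φ : A → D be a unital algebra homomorphism with Φ(d) = d for all d ∈ D and τ(Φ(a)) = τ(a) for all a ∈ A. Then D = A ∩ A*, where A* = {a* : a ∈ A}. Moreover Φ is unique: if Φ' : A → D is another unital algebra homomorphism with Φ'(d) = d for all d ∈ D and τ(Φ'(a)) = τ(a) for all a ∈ A, then Φ' = Φ. -/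
open scoped ComplexOrder

/-- Let `M` be a unital C*-algebra with a faithful tracial state `τ`, `D` a
C*-subalgebra of `M` containing the unit, `A` a unital subalgebra of `M` containing `D`, and
`Φ : A → D` a unital algebra homomorphism restricting to the identity on `D` and preserving `τ`.
Then `D = A ∩ A*`, and `Φ` is the unique such map. -/
theorem diagonal_eq_inter_star_and_unique
    {M : Type*} [CStarAlgebra M] [PartialOrder M] [StarOrderedRing M]
    (τ : M →ₗ[ℂ] ℂ)
    (hτ1 : τ 1 = 1)
    (hτpos : ∀ a : M, 0 ≤ a → 0 ≤ τ a)
    (hτtr : ∀ a b : M, τ (a * b) = τ (b * a))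
    (hτfaithful : ∀ a : M, τ (star a * a) = 0 → a = 0)
    (D A : Subalgebra ℂ M)
    (hDstar : ∀ d ∈ D, star d ∈ D)
    (hDclosed : IsClosed (D : Set M))
    (hDA : D ≤ A)
    (Φ : ↥A →ₐ[ℂ] M)
    (hΦD : ∀ a : ↥A, Φ a ∈ D)
    (hΦid : ∀ d : M, ∀ hd : d ∈ D, Φ ⟨d, hDA hd⟩ = d)
    (hΦτ : ∀ a : ↥A, τ (Φ a) = τ (a : M)) :
    (D : Set M) = {x : M | x ∈ A ∧ star x ∈ A} ∧
      ∀ Φ' : ↥A →ₐ[ℂ] M, (∀ a : ↥A, Φ' a ∈ D) →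
        (∀ d : M, ∀ hd : d ∈ D, Φ' ⟨d, hDA hd⟩ = d) →
        (∀ a : ↥A, τ (Φ' a) = τ (a : M)) → Φ' = Φ := by
  -- Key lemma: any τ-preserving hom fixing D is a "D-module map in trace".
  have key : ∀ (Ψ : ↥A →ₐ[ℂ] M),
      (∀ d : M, ∀ hd : d ∈ D, Ψ ⟨d, hDA hd⟩ = d) →
      (∀ a : ↥A, τ (Ψ a) = τ (a : M)) →
      ∀ (d : M) (hd : d ∈ D) (a : ↥A), τ (d * (a : M)) = τ (d * Ψ a) := by
    intro Ψ hid hτ d hd a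
    have h2 := hτ (⟨d, hDA hd⟩ * a)
    rw [map_mul, hid d hd] at h2
    have h3 : ((⟨d, hDA hd⟩ * a : ↥A) : M) = d * (a : M) := rfl
    rw [h3] at h2
    exact h2.symm
  constructor
  · ext x
    constructor
    · intro hx
      exact ⟨hDA hx, hDA (hDstar x hx)⟩
    · rintro ⟨hxA, hxsA⟩
      set a : ↥A := ⟨x, hxA⟩ with ha
      set s : ↥A := ⟨star x, hxsA⟩ with hs
      set p : M := Φ a with hp
      have hpD : p ∈ D := hΦD a
      have hspD : star p ∈ D := hDstar p hpD
      -- τ(star x * x) = τ(Φ s * p)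
      have e1 : τ (star x * x) = τ (Φ s * p) := by
        have := hΦτ (s * a)
        rw [map_mul] at this
        have h3 : ((s * a : ↥A) : M) = star x * x := rfl
        rw [h3] at this
        exact this.symm
      -- τ(star x * p) = τ(Φ s * p)
      have e2 : τ (star x * p) = τ (Φ s * p) := by
        rw [hτtr (star x) p, key Φ hΦid hΦτ p hpD s, hτtr p (Φ s)]
      -- τ(star p * x) = τ(star p * p)
      have e3 : τ (star p * x) = τ (star p * p) := by
        have := key Φ hΦid hΦτ (star p) hspD a
        simpa using this
      have expand : star (x - p) * (x - p)
          = star x * x - star x * p - star p * x + star p * p := by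
        simp only [star_sub]
        noncomm_ring
      have hz : τ (star (x - p) * (x - p)) = 0 := by
        rw [expand, map_add, map_sub, map_sub, e1, e2, e3]
        ring
      have hxp : x = p := sub_eq_zero.mp (hτfaithful (x - p) hz)
      rw [hxp]
      exact hpD
  · intro Φ' hD' hid' hτ'
    apply AlgHom.ext
    intro a
    set b : M := Φ' a - Φ a with hb
    have hbD : b ∈ D := D.sub_mem (hD' a) (hΦD a)
    have hsbD : star b ∈ D := hDstar b hbD
    have e1 := key Φ' hid' hτ' (star b) hsbD a
    have e2 := key Φ hΦid hΦτ (star b) hsbD a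
    have hz : τ (star b * b) = 0 := by
      rw [hb, mul_sub, map_sub, ← e1, ← e2, sub_self]
    have := hτfaithful b hz
    rw [hb] at this
    exact sub_eq_zero.mp this
end

section
/- Let A and B be associative algebras over ℂ and let Φ : A → B be a Jordan homomorphism, i.e. a linear map with Φ(x²) = Φ(x)² for all x ∈ A. Then for every a ∈ A with Φ(a) = 0 and every b ∈ A, the elements Φ(ab) and Φ(ba) have square zero: Φ(ab)² = 0 and Φ(ba)² = 0. -/
section JordanAux
variable {A B : Type*} [NonUnitalRing A] [Module ℂ A] [NonUnitalRing B] [Module ℂ B]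

private lemma jordan_polar (Φ : A →ₗ[ℂ] B) (hJordan : ∀ x : A, Φ (x * x) = Φ x * Φ x)
    (x y : A) :
    Φ (x * y) + Φ (y * x) = Φ x * Φ y + Φ y * Φ x := by
  have h := hJordan (x + y)
  simp only [add_mul, mul_add, map_add, hJordan] at h
  linear_combination (norm := abel) h

private lemma jordan_triple (Φ : A →ₗ[ℂ] B) (hJordan : ∀ x : A, Φ (x * x) = Φ x * Φ x)
    (x y : A) :
    Φ (x * y * x) = Φ x * Φ y * Φ x := by
  have hp := jordan_polar Φ hJordan
  have s := hp x y
  have h := hp x (x * y + y * x)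
  rw [map_add, s] at h
  have hsq := hp (x * x) y
  simp only [mul_add, add_mul, mul_assoc, map_add, hJordan] at h hsq ⊢
  have h2 : (2:ℂ) • Φ (x * (y * x)) = (2:ℂ) • (Φ x * (Φ y * Φ x)) := by
    rw [two_smul, two_smul]
    linear_combination (norm := abel) h - hsq
  exact smul_right_injective B (two_ne_zero (α := ℂ)) h2

private lemma jordan_triple_lin (Φ : A →ₗ[ℂ] B) (hJordan : ∀ x : A, Φ (x * x) = Φ x * Φ x)
    (x y z : A) :
    Φ (x * y * z) + Φ (z * y * x) = Φ x * Φ y * Φ z + Φ z * Φ y * Φ x := by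
  have h := jordan_triple Φ hJordan (x + z) y
  simp only [map_add, add_mul, mul_add, jordan_triple Φ hJordan] at h
  linear_combination (norm := abel) h

end JordanAux

/-- Let `Φ : A → B` be a Jordan homomorphism between associative ℂ-algebras,
i.e. a linear map with `Φ(x²) = Φ(x)²` for all `x`. Then for every `a ∈ A` with `Φ(a) = 0` and
every `b ∈ A`, the elements `Φ(ab)` and `Φ(ba)` have square zero. -/
theorem jordanHom_image_of_ker_mul_sq_zero
    {A B : Type*} [NonUnitalRing A] [Module ℂ A] [NonUnitalRing B] [Module ℂ B]
    (Φ : A →ₗ[ℂ] B)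
    (hJordan : ∀ x : A, Φ (x * x) = Φ x * Φ x)
    (a : A) (ha : Φ a = 0) (b : A) :
    Φ (a * b) * Φ (a * b) = 0 ∧ Φ (b * a) * Φ (b * a) = 0 := by
  have hba : Φ (b * a) = -Φ (a * b) := by
    have h := jordan_polar Φ hJordan a b
    rw [ha] at h
    simp only [zero_mul, mul_zero, add_zero, zero_add] at h
    linear_combination (norm := abel) h
  have h2 : Φ (a * (b * b) * a) = 0 := by
    rw [jordan_triple Φ hJordan, ha, zero_mul, mul_zero]
  have h : Φ (a * b * (a * b)) + Φ (a * b * b * a) = 0 := by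
    have h := jordan_triple_lin Φ hJordan a b (a * b)
    rw [ha] at h
    simpa using h
  have hassoc : a * b * b * a = a * (b * b) * a := by noncomm_ring
  rw [hassoc, h2, add_zero] at h
  have hsq : Φ (a * b) * Φ (a * b) = 0 := by
    rw [← hJordan (a * b)]
    exact h
  exact ⟨hsq, by rw [hba, neg_mul_neg, hsq]⟩
end

section
/- Let C be a C*-algebra, let A be a norm-closed subalgebra of C, and let B be a norm-closed selfadjoint subalgebra of A (so B is a C*-subalgebra of C contained in A). Let P : A → B be a linear Jordan homomorphism (P(x²) = P(x)² for all x ∈ A) with P(b) = b for all b ∈ B and P(b₁ a b₂) = b₁ P(a) b₂ for all b₁, b₂ ∈ B and a ∈ A. If B has no nonzero square-zero elements (b ∈ B and b² = 0 imply b = 0), then P is an algebra homomorphism: P(xy) = P(x)P(y) for all x, y ∈ A. -/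
/-- Let `C` be a C*-algebra, `A` a norm-closed subalgebra of `C`, and `B` a
norm-closed selfadjoint subalgebra of `A`. Let `P : A → B` be a linear Jordan homomorphism
restricting to the identity on `B` which is a `B`-bimodule map. If `B` has no nonzero
square-zero elements, then `P` is an algebra homomorphism. -/
theorem jordan_bimodule_projection_is_hom_of_no_sq_zero
    {C : Type*} [NonUnitalCStarAlgebra C] [StarModule ℂ C]
    (A B : NonUnitalSubalgebra ℂ C)
    (hAclosed : IsClosed (A : Set C))
    (hBclosed : IsClosed (B : Set C))
    (hBstar : ∀ b ∈ B, star b ∈ B)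
    (hBA : B ≤ A)
    (P : ↥A →ₗ[ℂ] C)
    (hPrange : ∀ x : ↥A, P x ∈ B)
    (hPJordan : ∀ x : ↥A, P (x * x) = P x * P x)
    (hPid : ∀ b : C, ∀ hb : b ∈ B, P ⟨b, hBA hb⟩ = b)
    (hPbimod : ∀ b₁ ∈ B, ∀ b₂ ∈ B, ∀ a : ↥A, ∀ h : b₁ * (a : C) * b₂ ∈ A,
      P ⟨b₁ * (a : C) * b₂, h⟩ = b₁ * P a * b₂)
    (hB_no_sq_zero : ∀ b ∈ B, b * b = 0 → b = 0) :
    ∀ x y : ↥A, P (x * y) = P x * P y := by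
  -- cancellation of doubling in C (a ℂ-vector space)
  have half : ∀ a b : C, a + a = b + b → a = b := by
    intro a b h
    have h2 : (2 : ℂ) • a = (2 : ℂ) • b := by rw [two_smul, two_smul]; exact h
    exact smul_right_injective C (two_ne_zero) h2
  -- linearized Jordan identity
  have hJ2 : ∀ x y : ↥A, P (x * y + y * x) = P x * P y + P y * P x := by
    intro x y
    have e : (x + y) * (x + y) = x * x + (x * y + y * x) + y * y := by
      simp only [mul_add, add_mul]; abel
    have h := hPJordan (x + y)
    rw [e] at h
    simp only [map_add] at h
    rw [hPJordan, hPJordan, add_mul, mul_add, mul_add] at h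
    rw [map_add]
    have h2 : (P (x * y) + P (y * x)) + (P x * P x + P y * P y)
        = (P x * P y + P y * P x) + (P x * P x + P y * P y) := by
      calc (P (x * y) + P (y * x)) + (P x * P x + P y * P y)
          = P x * P x + (P (x * y) + P (y * x)) + P y * P y := by abel
        _ = P x * P x + P x * P y + (P y * P x + P y * P y) := h
        _ = _ := by abel
    exact add_right_cancel h2
  -- ternary identity
  have hJ3 : ∀ x y : ↥A, P (x * y * x) = P x * P y * P x := by
    intro x y
    have e : x * y * x + x * y * x
        = (x * (x * y + y * x) + (x * y + y * x) * x) - (x * x * y + y * (x * x)) := by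
      simp only [mul_add, add_mul, mul_assoc]; abel
    have h := congrArg P e
    rw [map_add, map_sub, hJ2 x (x * y + y * x), hJ2 (x * x) y, hJ2 x y, hPJordan x] at h
    apply half
    rw [h]
    simp only [mul_add, add_mul, mul_assoc]
    abel
  -- linearized ternary identity
  have hJ3' : ∀ x z y : ↥A, P (x * z * y + y * z * x)
      = P x * P z * P y + P y * P z * P x := by
    intro x z y
    have e : (x + y) * z * (x + y) = x * z * x + (x * z * y + y * z * x) + y * z * y := by
      simp only [mul_add, add_mul]; abel
    have h := hJ3 (x + y) z
    rw [e] at h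
    simp only [map_add] at h
    rw [hJ3 x z, hJ3 y z, add_mul, add_mul, mul_add, mul_add] at h
    rw [map_add]
    have h2 : (P (x * z * y) + P (y * z * x)) + (P x * P z * P x + P y * P z * P y)
        = (P x * P z * P y + P y * P z * P x) + (P x * P z * P x + P y * P z * P y) := by
      calc (P (x * z * y) + P (y * z * x)) + (P x * P z * P x + P y * P z * P y)
          = P x * P z * P x + (P (x * z * y) + P (y * z * x)) + P y * P z * P y := by abel
        _ = P x * P z * P x + P x * P z * P y + (P y * P z * P x + P y * P z * P y) := h
        _ = _ := by abel
    exact add_right_cancel h2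
  -- key step: products with a kernel element are killed by P
  have KEY : ∀ p k : ↥A, P k = 0 → P (p * k) = 0 ∧ P (k * p) = 0 := by
    intro p k hk
    have hk2 : P (k * k) = 0 := by rw [hPJordan, hk, mul_zero]
    have hsum : P (p * k) + P (k * p) = 0 := by
      have h := hJ2 p k
      rw [hk, mul_zero, zero_mul, add_zero, map_add] at h
      exact h
    have hkp : P (k * p) = -P (p * k) := by
      have := eq_neg_of_add_eq_zero_right hsum
      exact this
    have hS1 : P (p * (k * p) * k) + P (k * (k * p) * p) = 0 := by
      have h := hJ3' p (k * p) k
      rw [hk, mul_zero, zero_mul, zero_mul, add_zero, map_add] at h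
      exact h
    have hS2 : P (k * (p * k) * p) + P (p * (p * k) * k) = 0 := by
      have h := hJ3' k (p * k) p
      rw [hk, mul_zero, zero_mul, zero_mul, add_zero, map_add] at h
      exact h
    have hT3 : P (p * (k * k) * p) = 0 := by
      rw [hJ3 p (k * k), hk2, mul_zero, zero_mul]
    have hT4 : P (k * (p * p) * k) = 0 := by
      rw [hJ3 k (p * p), hk, zero_mul, zero_mul]
    have hbracket : P (k * (k * p) * p) + P (p * (p * k) * k) = 0 := by
      have ea : k * (k * p) * p = (k * k) * (p * p) := by simp [mul_assoc]
      have eb : p * (p * k) * k = (p * p) * (k * k) := by simp [mul_assoc]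
      have h := hJ2 (k * k) (p * p)
      rw [hk2, zero_mul, mul_zero, add_zero, map_add] at h
      rw [ea, eb]
      exact h
    have hdd : (p * k - k * p) * (p * k - k * p)
        = (p * (k * p) * k + k * (p * k) * p) - (p * (k * k) * p + k * (p * p) * k) := by
      simp only [sub_mul, mul_sub, mul_assoc]; abel
    have hPdd : P ((p * k - k * p) * (p * k - k * p)) = 0 := by
      rw [hdd, map_sub, map_add, map_add, hT3, hT4]
      have e1 : P (p * (k * p) * k) = -P (k * (k * p) * p) :=
        eq_neg_of_add_eq_zero_left hS1
      have e2 : P (k * (p * k) * p) = -P (p * (p * k) * k) :=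
        eq_neg_of_add_eq_zero_left hS2
      rw [e1, e2, add_zero, sub_zero, ← neg_add, hbracket, neg_zero]
    have hPd : P (p * k - k * p) = P (p * k) + P (p * k) := by
      rw [map_sub, hkp, sub_neg_eq_add]
    have hvv0 : (P (p * k) + P (p * k)) * (P (p * k) + P (p * k)) = 0 := by
      rw [← hPd, ← hPJordan]
      exact hPdd
    have h4 : ((2 : ℂ) * 2) • (P (p * k) * P (p * k)) = 0 := by
      have h' : ((2 : ℂ) • P (p * k)) * ((2 : ℂ) • P (p * k)) = 0 := by
        rw [two_smul]; exact hvv0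
      rwa [smul_mul_assoc, mul_smul_comm, smul_smul] at h'
    have hvv : P (p * k) * P (p * k) = 0 := by
      rcases smul_eq_zero.mp h4 with h | h
      · exact absurd h (by norm_num)
      · exact h
    have hv : P (p * k) = 0 := hB_no_sq_zero _ (hPrange _) hvv
    exact ⟨hv, by rw [hkp, hv, neg_zero]⟩
  -- main argument
  intro x y
  have hx := hPrange x
  have hy := hPrange y
  have hPpx : P ⟨P x, hBA hx⟩ = P x := hPid _ hx
  have hPpy : P ⟨P y, hBA hy⟩ = P y := hPid _ hy
  have hkx : P (x - ⟨P x, hBA hx⟩) = 0 := by rw [map_sub, hPpx, sub_self]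
  have hky : P (y - ⟨P y, hBA hy⟩) = 0 := by rw [map_sub, hPpy, sub_self]
  have hsplit : x * y = (⟨P x, hBA hx⟩ : ↥A) * ⟨P y, hBA hy⟩
      + (⟨P x, hBA hx⟩ : ↥A) * (y - ⟨P y, hBA hy⟩)
      + (x - ⟨P x, hBA hx⟩) * ⟨P y, hBA hy⟩
      + (x - ⟨P x, hBA hx⟩) * (y - ⟨P y, hBA hy⟩) := by
    simp only [mul_sub, sub_mul]; abel
  have hmem : P x * P y ∈ B := mul_mem hx hy
  have h1 : P ((⟨P x, hBA hx⟩ : ↥A) * ⟨P y, hBA hy⟩) = P x * P y := hPid _ hmem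
  rw [hsplit, map_add, map_add, map_add, h1,
    (KEY _ _ hky).1, (KEY _ _ hkx).2, (KEY _ _ hky).1, add_zero, add_zero, add_zero]
end

section
/- Let C be a C*-algebra, let A be a norm-closed subalgebra of C, and let B be a norm-closed selfadjoint subalgebra of A (so B is a C*-subalgebra of C contained in A). Let P : A → B be a linear Jordan homomorphism (P(x²) = P(x)² for all x ∈ A) with P(b) = b for all b ∈ B and P(b₁ a b₂) = b₁ P(a) b₂ for all b₁, b₂ ∈ B and a ∈ A. Then P is an algebra homomorphism: P(xy) = P(x)P(y) for all x, y ∈ A. -/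
private lemma star_trick {C : Type*} [NonUnitalCStarAlgebra C] (q : C)
    (h : star q * q * star q = 0) : q = 0 := by
  have h2 : (q * star q) * (q * star q) = 0 := by
    calc (q * star q) * (q * star q) = q * (star q * q * star q) := by
          simp [mul_assoc]
      _ = 0 := by rw [h, mul_zero]
  have h3 : q * star q = 0 := by
    have hn : ‖q * star q‖ * ‖q * star q‖ = 0 := by
      rw [← CStarRing.norm_self_mul_star (x := q * star q), star_mul, star_star, h2, norm_zero]
    exact norm_eq_zero.mp (mul_self_eq_zero.mp hn)
  have hq : ‖q‖ * ‖q‖ = 0 := by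
    rw [← CStarRing.norm_self_mul_star, h3, norm_zero]
  exact norm_eq_zero.mp (mul_self_eq_zero.mp hq)

/-- Let `C` be a C*-algebra, `A` a norm-closed subalgebra of `C`, and `B` a
norm-closed selfadjoint subalgebra of `A`. Let `P : A → B` be a linear Jordan homomorphism
restricting to the identity on `B` which is a `B`-bimodule map. Then `P` is an algebra
homomorphism. -/
theorem jordan_bimodule_projection_is_hom
    {C : Type*} [NonUnitalCStarAlgebra C] [StarModule ℂ C]
    (A B : NonUnitalSubalgebra ℂ C)
    (hAclosed : IsClosed (A : Set C))
    (hBclosed : IsClosed (B : Set C))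
    (hBstar : ∀ b ∈ B, star b ∈ B)
    (hBA : B ≤ A)
    (P : ↥A →ₗ[ℂ] C)
    (hPrange : ∀ x : ↥A, P x ∈ B)
    (hPJordan : ∀ x : ↥A, P (x * x) = P x * P x)
    (hPid : ∀ b : C, ∀ hb : b ∈ B, P ⟨b, hBA hb⟩ = b)
    (hPbimod : ∀ b₁ ∈ B, ∀ b₂ ∈ B, ∀ a : ↥A, ∀ h : b₁ * (a : C) * b₂ ∈ A,
      P ⟨b₁ * (a : C) * b₂, h⟩ = b₁ * P a * b₂) :
    ∀ x y : ↥A, P (x * y) = P x * P y := by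
  -- congruence through the subtype coercion
  have Pc : ∀ u v : ↥A, (u : C) = (v : C) → P u = P v := fun u v h =>
    congrArg P (Subtype.ext h)
  -- if q ∈ B is killed by two-sided multiplication by B, then q = 0
  have key0 : ∀ q : C, q ∈ B → (∀ b₁ ∈ B, ∀ b₂ ∈ B, b₁ * q * b₂ = 0) → q = 0 := by
    intro q hq h
    have hsq := hBstar q hq
    exact star_trick q (h (star q) hsq (star q) hsq)
  -- Jordan polarization
  have J0 : ∀ x y : ↥A, P (x * y + y * x) = P x * P y + P y * P x := by
    intro x y
    have e : x * y + y * x = (x + y) * (x + y) - x * x - y * y := by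
      simp only [add_mul, mul_add]; abel
    rw [e, map_sub, map_sub, hPJordan, hPJordan, hPJordan, map_add]
    simp only [add_mul, mul_add]; abel
  -- Jordan triple
  have J1 : ∀ x y : ↥A, P (x * y * x) = P x * P y * P x := by
    intro x y
    have h1 := J0 x (x * y + y * x)
    have e : x * (x * y + y * x) + (x * y + y * x) * x
        = ((x * x) * y + y * (x * x)) + (2 : ℂ) • (x * y * x) := by
      simp only [mul_add, add_mul, two_smul, mul_assoc]; abel
    rw [e, map_add, map_smul, J0 (x * x) y, hPJordan x, J0 x y] at h1
    have h2 : (2 : ℂ) • P (x * y * x) = (2 : ℂ) • (P x * P y * P x) := by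
      rw [eq_sub_of_add_eq' h1]
      simp only [mul_add, add_mul, two_smul, mul_assoc]; abel
    exact smul_right_injective C two_ne_zero h2
  -- trilinear Jordan triple
  have J2 : ∀ x y z : ↥A, P (x * y * z + z * y * x)
      = P x * P y * P z + P z * P y * P x := by
    intro x y z
    have h1 := J1 (x + z) y
    have e : (x + z) * y * (x + z) = x * y * x + (x * y * z + z * y * x) + z * y * z := by
      simp only [add_mul, mul_add]; abel
    rw [e] at h1
    simp only [map_add] at h1
    rw [J1 x y, J1 z y] at h1
    have h2 : P (x * y * z) + P (z * y * x)
        = (P x + P z) * P y * (P x + P z) - P x * P y * P x - P z * P y * P z := by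
      rw [← h1]; abel
    rw [map_add, h2]
    simp only [add_mul, mul_add]; abel
  -- right absorption: ker P is stable under right multiplication by B
  have A1 : ∀ z : ↥A, P z = 0 → ∀ b (hb : b ∈ B), P (z * ⟨b, hBA hb⟩) = 0 := by
    intro z hz b hb
    apply key0 _ (hPrange _)
    intro b₁ hb₁ b₂ hb₂
    have m1 : b₁ * ((z * ⟨b, hBA hb⟩ : ↥A) : C) * b₂ ∈ A :=
      mul_mem (mul_mem (hBA hb₁) (z * ⟨b, hBA hb⟩).2) (hBA hb₂)
    have e1 := hPbimod b₁ hb₁ b₂ hb₂ (z * ⟨b, hBA hb⟩) m1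
    have m2 : b₁ * (z : C) * (b * b₂) ∈ A :=
      mul_mem (mul_mem (hBA hb₁) z.2) (hBA (mul_mem hb hb₂))
    have e2 := hPbimod b₁ hb₁ (b * b₂) (mul_mem hb hb₂) z m2
    have e3 : P ⟨b₁ * ((z * ⟨b, hBA hb⟩ : ↥A) : C) * b₂, m1⟩
        = P ⟨b₁ * (z : C) * (b * b₂), m2⟩ := by
      apply Pc; simp [mul_assoc]
    rw [← e1, e3, e2, hz, mul_zero, zero_mul]
  -- left absorption
  have A2 : ∀ z : ↥A, P z = 0 → ∀ b (hb : b ∈ B), P ((⟨b, hBA hb⟩ : ↥A) * z) = 0 := by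
    intro z hz b hb
    apply key0 _ (hPrange _)
    intro b₁ hb₁ b₂ hb₂
    have m1 : b₁ * (((⟨b, hBA hb⟩ : ↥A) * z : ↥A) : C) * b₂ ∈ A :=
      mul_mem (mul_mem (hBA hb₁) ((⟨b, hBA hb⟩ : ↥A) * z).2) (hBA hb₂)
    have e1 := hPbimod b₁ hb₁ b₂ hb₂ ((⟨b, hBA hb⟩ : ↥A) * z) m1
    have m2 : (b₁ * b) * (z : C) * b₂ ∈ A :=
      mul_mem (mul_mem (hBA (mul_mem hb₁ hb)) z.2) (hBA hb₂)
    have e2 := hPbimod (b₁ * b) (mul_mem hb₁ hb) b₂ hb₂ z m2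
    have e3 : P ⟨b₁ * (((⟨b, hBA hb⟩ : ↥A) * z : ↥A) : C) * b₂, m1⟩
        = P ⟨(b₁ * b) * (z : C) * b₂, m2⟩ := by
      apply Pc; simp [mul_assoc]
    rw [← e1, e3, e2, hz, mul_zero, zero_mul]
  -- the fundamental sandwich relation
  have R : ∀ z w : ↥A, P z = 0 → P w = 0 → ∀ b₁ (hb₁ : b₁ ∈ B), ∀ b₂ (hb₂ : b₂ ∈ B),
      b₁ * P (z * w) * b₂
        = P (z * ⟨b₂ * b₁, hBA (mul_mem hb₂ hb₁)⟩ * w) := by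
    intro z w hz hw b₁ hb₁ b₂ hb₂
    have hu : P ((⟨b₁, hBA hb₁⟩ : ↥A) * z) = 0 := A2 z hz b₁ hb₁
    have hv : P (w * (⟨b₂, hBA hb₂⟩ : ↥A)) = 0 := A1 w hw b₂ hb₂
    have p1 := J0 ((⟨b₁, hBA hb₁⟩ : ↥A) * z) (w * (⟨b₂, hBA hb₂⟩ : ↥A))
    rw [hu, hv, map_add] at p1
    simp only [zero_mul, mul_zero, add_zero] at p1
    have p2 : P (((⟨b₁, hBA hb₁⟩ : ↥A) * z) * (w * (⟨b₂, hBA hb₂⟩ : ↥A)))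
        = - P ((w * (⟨b₂, hBA hb₂⟩ : ↥A)) * ((⟨b₁, hBA hb₁⟩ : ↥A) * z)) :=
      eq_neg_of_add_eq_zero_left p1
    have m1 : b₁ * ((z * w : ↥A) : C) * b₂ ∈ A :=
      mul_mem (mul_mem (hBA hb₁) (z * w).2) (hBA hb₂)
    have e1 := hPbimod b₁ hb₁ b₂ hb₂ (z * w) m1
    have e1' : P (((⟨b₁, hBA hb₁⟩ : ↥A) * z) * (w * (⟨b₂, hBA hb₂⟩ : ↥A)))
        = b₁ * P (z * w) * b₂ := by
      rw [← e1]; apply Pc; simp [mul_assoc]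
    have e2 : P ((w * (⟨b₂, hBA hb₂⟩ : ↥A)) * ((⟨b₁, hBA hb₁⟩ : ↥A) * z))
        = P (w * ⟨b₂ * b₁, hBA (mul_mem hb₂ hb₁)⟩ * z) := by
      apply Pc; simp [mul_assoc]
    have t := J2 w (⟨b₂ * b₁, hBA (mul_mem hb₂ hb₁)⟩ : ↥A) z
    rw [hz, hw, map_add] at t
    simp only [zero_mul, mul_zero, add_zero, zero_add] at t
    have t2 : P (w * (⟨b₂ * b₁, hBA (mul_mem hb₂ hb₁)⟩ : ↥A) * z)
        = - P (z * (⟨b₂ * b₁, hBA (mul_mem hb₂ hb₁)⟩ : ↥A) * w) :=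
      eq_neg_of_add_eq_zero_left t
    rw [← e1', p2, e2, t2, neg_neg]
  -- the key lemma : P kills products of kernel elements
  have KL : ∀ z w : ↥A, P z = 0 → P w = 0 → P (z * w) = 0 := by
    intro z w hz hw
    -- antisymmetry
    have p := J0 z w
    rw [hz, hw, map_add] at p
    simp only [zero_mul, mul_zero, add_zero] at p
    have anti : P (w * z) = - P (z * w) := eq_neg_of_add_eq_zero_right p
    -- square zero
    have hd2 : P (z * w) * P (z * w) = 0 := by
      have h3 := J0 z (w * z * w)
      rw [hz] at h3
      simp only [zero_mul, mul_zero, add_zero] at h3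
      have e : (z * w) * (z * w) + (w * z) * (w * z)
          = z * (w * z * w) + (w * z * w) * z := by
        simp [mul_assoc]
      have h4 : P ((z * w) * (z * w)) + P ((w * z) * (w * z)) = 0 := by
        rw [← map_add, e]; exact h3
      rw [hPJordan (z * w), hPJordan (w * z), anti, neg_mul_neg] at h4
      have h5 : (2 : ℂ) • (P (z * w) * P (z * w)) = 0 := by
        rw [two_smul]; exact h4
      rcases smul_eq_zero.mp h5 with h | h
      · exact absurd h two_ne_zero
      · exact h
    -- the commutation relation
    have T : ∀ b₁ ∈ B, ∀ b₂ ∈ B,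
        b₁ * P (z * w) * b₂ = b₂ * b₁ * P (z * w) := by
      intro b₁ hb₁ b₂ hb₂
      have hq : b₁ * P (z * w) * b₂ - b₂ * b₁ * P (z * w) ∈ B :=
        sub_mem (mul_mem (mul_mem hb₁ (hPrange _)) hb₂)
          (mul_mem (mul_mem hb₂ hb₁) (hPrange _))
      have h0 : ∀ β₁ ∈ B, ∀ β₂ ∈ B,
          β₁ * (b₁ * P (z * w) * b₂ - b₂ * b₁ * P (z * w)) * β₂ = 0 := by
        intro β₁ hβ₁ β₂ hβ₂
        have hw₁ : P ((⟨b₂ * b₁, hBA (mul_mem hb₂ hb₁)⟩ : ↥A) * w) = 0 :=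
          A2 w hw (b₂ * b₁) (mul_mem hb₂ hb₁)
        have s1 : b₁ * P (z * w) * b₂
            = P (z * ((⟨b₂ * b₁, hBA (mul_mem hb₂ hb₁)⟩ : ↥A) * w)) := by
          rw [R z w hz hw b₁ hb₁ b₂ hb₂, mul_assoc]
        have s2 := R z ((⟨b₂ * b₁, hBA (mul_mem hb₂ hb₁)⟩ : ↥A) * w) hz hw₁ β₁ hβ₁ β₂ hβ₂
        have s3 : P (z * (⟨β₂ * β₁, hBA (mul_mem hβ₂ hβ₁)⟩ : ↥A)
              * ((⟨b₂ * b₁, hBA (mul_mem hb₂ hb₁)⟩ : ↥A) * w))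
            = P (z * (⟨β₂ * (β₁ * b₂ * b₁),
                hBA (mul_mem hβ₂ (mul_mem (mul_mem hβ₁ hb₂) hb₁))⟩ : ↥A) * w) := by
          apply Pc; simp [mul_assoc]
        have s4 := (R z w hz hw (β₁ * b₂ * b₁) (mul_mem (mul_mem hβ₁ hb₂) hb₁) β₂ hβ₂).symm
        have main : β₁ * (b₁ * P (z * w) * b₂) * β₂
            = β₁ * (b₂ * b₁ * P (z * w)) * β₂ := by
          rw [s1, s2, s3, s4]
          simp [mul_assoc]
        rw [mul_sub, sub_mul, main, sub_self]
      exact sub_eq_zero.mp (key0 _ hq h0)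
    have t3 : P (z * w) * star (P (z * w)) * P (z * w) = 0 := by
      have t1 := T (star (P (z * w))) (hBstar _ (hPrange _)) (P (z * w)) (hPrange _)
      rw [mul_assoc, hd2, mul_zero] at t1
      exact t1.symm
    have hstar : star (P (z * w)) = 0 :=
      star_trick (star (P (z * w))) (by rw [star_star]; exact t3)
    exact star_eq_zero.mp hstar
  -- assemble
  intro x y
  have hbx := hPrange x
  have hby := hPrange y
  have hz : P (x - ⟨P x, hBA hbx⟩) = 0 := by
    rw [map_sub, hPid (P x) hbx, sub_self]
  have hw : P (y - ⟨P y, hBA hby⟩) = 0 := by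
    rw [map_sub, hPid (P y) hby, sub_self]
  have decomp : x * y
      = (x - ⟨P x, hBA hbx⟩) * (y - ⟨P y, hBA hby⟩)
        + (x - ⟨P x, hBA hbx⟩) * ⟨P y, hBA hby⟩
        + (⟨P x, hBA hbx⟩ : ↥A) * (y - ⟨P y, hBA hby⟩)
        + (⟨P x, hBA hbx⟩ : ↥A) * ⟨P y, hBA hby⟩ := by
    simp only [sub_mul, mul_sub]; abel
  have hlast : P ((⟨P x, hBA hbx⟩ : ↥A) * ⟨P y, hBA hby⟩) = P x * P y := by
    have h := hPid (P x * P y) (mul_mem hbx hby)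
    rw [← h]; apply Pc; simp
  rw [decomp, map_add, map_add, map_add, KL _ _ hz hw,
    A1 _ hz (P y) hby, A2 _ hw (P x) hbx, hlast, zero_add, zero_add, zero_add]
end

section
/- Let M be a unital C*-algebra with a tracial state τ, let D be a C*-subalgebra of M on which τ is faithful, let A be a unital subalgebra of M containing D, and let Φ : A → D be a unital contractive linear D-bimodule map with τ(Φ(a)) = τ(a) for all a ∈ A. Then Φ is an algebra homomorphism if and only if for all complex coefficients c₀, …, c₆, all d ∈ D and all a ∈ A, ‖q(d, Φ(a))‖₂ ≤ ‖q(d, a)‖₂, where q(s, t) = c₀·1 + c₁ s + c₂ t + c₃ s² + c₄ st + c₅ ts + c₆ t² (a noncommutative polynomial supported on words of length at most 2 in the two variables) and ‖y‖₂ = τ(y*y)^{1/2}. -/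
open scoped ComplexOrder

/-- The noncommutative quadratic polynomial
`q(s,t) = c₀·1 + c₁ s + c₂ t + c₃ s² + c₄ st + c₅ ts + c₆ t²`. -/
noncomputable def qpoly {M : Type*} [Ring M] [Algebra ℂ M] (c : Fin 7 → ℂ) (s t : M) : M :=
  c 0 • (1 : M) + c 1 • s + c 2 • t + c 3 • (s * s) + c 4 • (s * t) + c 5 • (t * s) +
    c 6 • (t * t)

/-- The `L²`-seminorm `‖y‖₂ = τ(y*y)^{1/2}` associated to a state `τ`. -/
noncomputable def l2seminorm {M : Type*} [Ring M] [StarRing M] [Algebra ℂ M]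
    (τ : M →ₗ[ℂ] ℂ) (y : M) : ℝ :=
  Real.sqrt ((τ (star y * y)).re)

lemma tau_im_sa {M : Type*} [CStarAlgebra M] [PartialOrder M] [StarOrderedRing M]
    (τ : M →ₗ[ℂ] ℂ) (hτpos : ∀ a : M, 0 ≤ a → 0 ≤ τ a)
    {w : M} (hw : IsSelfAdjoint w) : (τ w).im = 0 := by
  have h1 : (τ 1).im = 0 := by
    have := hτpos 1 (by simpa using star_mul_self_nonneg (1 : M))
    rw [Complex.le_def] at this
    simpa using this.2.symm
  have h2 : 0 ≤ τ (algebraMap ℝ M ‖w‖ - w) := by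
    apply hτpos
    simpa using hw.le_algebraMap_norm_self
  rw [Complex.le_def] at h2
  have h3 : algebraMap ℝ M ‖w‖ = ((‖w‖ : ℂ)) • (1 : M) := by
    rw [IsScalarTower.algebraMap_apply ℝ ℂ M, Algebra.algebraMap_eq_smul_one]; norm_num
  have h4 : τ (algebraMap ℝ M ‖w‖ - w) = (‖w‖ : ℂ) * τ 1 - τ w := by
    rw [map_sub, h3, map_smul, smul_eq_mul]
  rw [h4] at h2
  have := h2.2.symm
  simp [Complex.sub_im, Complex.mul_im, h1] at this
  linarith

lemma tau_star {M : Type*} [CStarAlgebra M] [PartialOrder M] [StarOrderedRing M]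
    (τ : M →ₗ[ℂ] ℂ) (hτpos : ∀ a : M, 0 ≤ a → 0 ≤ τ a)
    (z : M) : τ (star z) = starRingEnd ℂ (τ z) := by
  have h1 : (τ (z + star z)).im = 0 :=
    tau_im_sa τ hτpos (by simp [IsSelfAdjoint, add_comm])
  have h2 : (τ (Complex.I • (z - star z))).im = 0 :=
    tau_im_sa τ hτpos (by
      simp only [IsSelfAdjoint, star_smul, star_sub, star_star, Complex.star_def,
        Complex.conj_I, neg_smul, smul_sub]
      abel)
  rw [map_add] at h1
  rw [map_smul, smul_eq_mul, map_sub] at h2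
  simp only [Complex.add_im, Complex.mul_im, Complex.I_re, Complex.I_im, Complex.sub_re,
    Complex.sub_im] at h1 h2
  apply Complex.ext <;> simp [Complex.conj_re, Complex.conj_im] <;> linarith

lemma scale_nonpos {E X : ℝ} (hX : 0 ≤ X) (key : ∀ μ : ℝ, 0 < μ → 2 * E ≤ μ * X) :
    E ≤ 0 := by
  by_contra hcon
  push_neg at hcon
  have hμpos : 0 < E / (X + 1) := div_pos hcon (by linarith)
  have hk := key _ hμpos
  have h5 : E / (X + 1) * X = E - E / (X + 1) := by
    field_simp
    ring
  linarith

set_option maxHeartbeats 1000000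

/-- Let `M` be a unital C*-algebra with a tracial state `τ`, `D` a
C*-subalgebra of `M` on which `τ` is faithful, `A` a unital subalgebra of `M` containing `D`,
and `Φ : A → D` a unital contractive linear `D`-bimodule map with `τ ∘ Φ = τ` on `A`. Then `Φ`
is an algebra homomorphism if and only if `‖q(d, Φ(a))‖₂ ≤ ‖q(d, a)‖₂` for every noncommutative
polynomial `q` supported on words of length at most 2, every `d ∈ D` and every `a ∈ A`. -/
theorem hom_iff_quadratic_l2_contractive
    {M : Type*} [CStarAlgebra M] [PartialOrder M] [StarOrderedRing M]
    (τ : M →ₗ[ℂ] ℂ)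
    (hτ1 : τ 1 = 1)
    (hτpos : ∀ a : M, 0 ≤ a → 0 ≤ τ a)
    (hτtr : ∀ a b : M, τ (a * b) = τ (b * a))
    (D A : Subalgebra ℂ M)
    (hDstar : ∀ d ∈ D, star d ∈ D)
    (hDclosed : IsClosed (D : Set M))
    (hτfaithfulD : ∀ d ∈ D, τ (star d * d) = 0 → d = 0)
    (hDA : D ≤ A)
    (Φ : ↥A →ₗ[ℂ] M)
    (hΦD : ∀ a : ↥A, Φ a ∈ D)
    (hΦ1 : Φ 1 = 1)
    (hΦcontr : ∀ a : ↥A, ‖Φ a‖ ≤ ‖(a : M)‖)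
    (hΦbimod : ∀ d₁ : M, ∀ hd₁ : d₁ ∈ D, ∀ d₂ : M, ∀ hd₂ : d₂ ∈ D, ∀ a : ↥A,
      Φ ⟨d₁ * (a : M) * d₂, mul_mem (mul_mem (hDA hd₁) a.2) (hDA hd₂)⟩ = d₁ * Φ a * d₂)
    (hΦτ : ∀ a : ↥A, τ (Φ a) = τ (a : M)) :
    (∀ x y : ↥A, Φ (x * y) = Φ x * Φ y) ↔
      (∀ c : Fin 7 → ℂ, ∀ d ∈ D, ∀ a : ↥A,
        l2seminorm τ (qpoly c d (Φ a)) ≤ l2seminorm τ (qpoly c d (a : M))) := by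
  have htstar : ∀ z : M, τ (star z) = starRingEnd ℂ (τ z) := tau_star τ hτpos
  have hposre : ∀ w : M, 0 ≤ (τ (star w * w)).re := by
    intro w
    have := hτpos _ (star_mul_self_nonneg w)
    rw [Complex.le_def] at this
    simpa using this.1
  have hposim : ∀ w : M, (τ (star w * w)).im = 0 := by
    intro w
    have := hτpos _ (star_mul_self_nonneg w)
    rw [Complex.le_def] at this
    simpa using this.2.symm
  have hΦD' : ∀ (d : M) (hd : d ∈ D), Φ ⟨d, hDA hd⟩ = d := by
    intro d hd
    have h1 := hΦbimod d hd 1 (one_mem D) 1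
    have he : (⟨d * ((1 : ↥A) : M) * 1, mul_mem (mul_mem (hDA hd) (1 : ↥A).2)
        (hDA (one_mem D))⟩ : ↥A) = ⟨d, hDA hd⟩ := by
      apply Subtype.ext; simp
    rw [he] at h1
    rw [h1, hΦ1]; simp
  have hcrossτ : ∀ (d : M) (hd : d ∈ D) (z : ↥A), τ (d * (z : M)) = τ (d * Φ z) := by
    intro d hd z
    have h1 := hΦbimod d hd 1 (one_mem D) z
    have h2 := hΦτ ⟨d * (z : M) * 1,
      mul_mem (mul_mem (hDA hd) z.2) (hDA (one_mem D))⟩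
    rw [h1] at h2
    simpa [mul_one] using h2.symm
  constructor
  · -- homomorphism ⇒ inequality
    intro hhom c d hd a
    set dA : ↥A := ⟨d, hDA hd⟩ with hdA
    set z : ↥A := c 0 • 1 + c 1 • dA + c 2 • a + c 3 • (dA * dA) + c 4 • (dA * a)
      + c 5 • (a * dA) + c 6 • (a * a) with hzdef
    have hz : (z : M) = qpoly c d (a : M) := by
      simp [hzdef, qpoly, hdA]
    have hΦdAdA : Φ (dA * dA) = d * d := by
      have h1 := hΦbimod d hd d hd 1
      have he : (⟨d * ((1 : ↥A) : M) * d, mul_mem (mul_mem (hDA hd) (1 : ↥A).2)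
          (hDA hd)⟩ : ↥A) = dA * dA := by
        apply Subtype.ext; simp [hdA]
      rw [he] at h1
      rw [h1, hΦ1]; simp
    have hΦdAa : Φ (dA * a) = d * Φ a := by
      have h1 := hΦbimod d hd 1 (one_mem D) a
      have he : (⟨d * (a : M) * 1, mul_mem (mul_mem (hDA hd) a.2)
          (hDA (one_mem D))⟩ : ↥A) = dA * a := by
        apply Subtype.ext; simp [hdA]
      rw [he] at h1
      rw [h1]; simp
    have hΦadA : Φ (a * dA) = Φ a * d := by
      have h1 := hΦbimod 1 (one_mem D) d hd a
      have he : (⟨1 * (a : M) * d, mul_mem (mul_mem (hDA (one_mem D)) a.2)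
          (hDA hd)⟩ : ↥A) = a * dA := by
        apply Subtype.ext; simp [hdA]
      rw [he] at h1
      rw [h1]; simp
    have hΦz : Φ z = qpoly c d (Φ a) := by
      rw [hzdef]
      simp only [map_add, map_smul, hΦ1, hΦD' d hd, hΦdAdA, hΦdAa, hΦadA, hhom a a]
      rw [hdA, hΦD' d hd]; rfl
    -- L² contractivity of Φ
    have hcon : (τ (star (Φ z) * Φ z)).re ≤ (τ (star (z : M) * (z : M))).re := by
      set p := Φ z with hp
      have k1 : τ (star p * (z : M)) = τ (star p * p) := by
        have := hcrossτ (star p) (hDstar p (hΦD z)) z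
        rw [this, ← hp]
      have k2 : (τ (star (z : M) * p)).re = (τ (star p * p)).re := by
        have hsw : star (z : M) * p = star (star p * (z : M)) := by
          rw [star_mul, star_star]
        rw [hsw, htstar, k1]
        exact Complex.conj_re _
      have k0 : 0 ≤ (τ (star ((z : M) - p) * ((z : M) - p))).re := hposre _
      have kexp : τ (star ((z : M) - p) * ((z : M) - p))
          = τ (star (z : M) * (z : M)) - τ (star (z : M) * p)
            - τ (star p * (z : M)) + τ (star p * p) := by
        simp only [star_sub, sub_mul, mul_sub, map_sub, map_add]
        ring
      rw [kexp] at k0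
      have k1' : (τ (star p * (z : M))).re = (τ (star p * p)).re := by rw [k1]
      simp only [Complex.add_re, Complex.sub_re] at k0
      linarith
    rw [l2seminorm, l2seminorm, ← hz, ← hΦz]
    exact Real.sqrt_le_sqrt hcon
  · -- inequality ⇒ homomorphism
    intro h
    -- Step A: kernel is closed under squares
    have hker2 : ∀ a : ↥A, Φ a = 0 → Φ (a * a) = 0 := by
      intro a ha
      set e := Φ (a * a) with hedef
      have heD := hΦD (a * a)
      have hEc := hτpos _ (star_mul_self_nonneg e)
      rw [Complex.le_def] at hEc
      set E := (τ (star e * e)).re with hEdef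
      have hE0 : 0 ≤ E := by simpa using hEc.1
      have hEim : (τ (star e * e)).im = 0 := by simpa using hEc.2.symm
      have hc1 : τ (star e * ((a : M) * (a : M))) = τ (star e * e) := by
        have := hcrossτ (star e) (hDstar e heD) (a * a)
        simpa using this
      have hc2 : (τ (star ((a : M) * (a : M)) * e)).re = E := by
        have hsw : star (star e * ((a : M) * (a : M)))
            = star ((a : M) * (a : M)) * e := by rw [star_mul, star_star]
        rw [← hsw, htstar, hc1, hEdef]
        exact Complex.conj_re _
      set X := (τ (star ((a : M) * (a : M)) * ((a : M) * (a : M)))).re with hXdef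
      have hX0 : 0 ≤ X := hposre _
      have key : ∀ μ : ℝ, 0 < μ → 2 * E ≤ μ * X := by
        intro μ hμ
        have hq := h ![0, -1, 0, 0, 0, 0, (μ : ℂ)] e heD a
        have hL : qpoly ![0, -1, 0, 0, 0, 0, (μ : ℂ)] e (Φ a) = -e := by
          show (0 : ℂ) • (1 : M) + (-1 : ℂ) • e + (0 : ℂ) • Φ a + (0 : ℂ) • (e * e)
              + (0 : ℂ) • (e * Φ a) + (0 : ℂ) • (Φ a * e) + (μ : ℂ) • (Φ a * Φ a) = -e
          rw [ha]
          simp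
        have hR : qpoly ![0, -1, 0, 0, 0, 0, (μ : ℂ)] e ((a : M))
            = -e + (μ : ℂ) • ((a : M) * (a : M)) := by
          show (0 : ℂ) • (1 : M) + (-1 : ℂ) • e + (0 : ℂ) • (a : M) + (0 : ℂ) • (e * e)
              + (0 : ℂ) • (e * (a : M)) + (0 : ℂ) • ((a : M) * e)
              + (μ : ℂ) • ((a : M) * (a : M)) = -e + (μ : ℂ) • ((a : M) * (a : M))
          simp only [zero_smul, zero_add, add_zero, neg_smul, one_smul]
        rw [hL, hR, l2seminorm, l2seminorm] at hq
        have hRpos : 0 ≤ (τ (star (-e + (μ : ℂ) • ((a : M) * (a : M)))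
            * (-e + (μ : ℂ) • ((a : M) * (a : M))))).re := hposre _
        have hq2 : (τ (star (-e) * (-e))).re
            ≤ (τ (star (-e + (μ : ℂ) • ((a : M) * (a : M)))
              * (-e + (μ : ℂ) • ((a : M) * (a : M))))).re :=
          (Real.sqrt_le_sqrt_iff hRpos).mp hq
        have hexp : τ (star (-e + (μ : ℂ) • ((a : M) * (a : M)))
            * (-e + (μ : ℂ) • ((a : M) * (a : M))))
            = τ (star e * e) - (μ : ℂ) * τ (star e * ((a : M) * (a : M)))
              - (μ : ℂ) * τ (star ((a : M) * (a : M)) * e)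
              + ((μ : ℂ) * (μ : ℂ)) * τ (star ((a : M) * (a : M)) * ((a : M) * (a : M))) := by
          have hst : star ((μ : ℂ) • ((a : M) * (a : M)))
              = (μ : ℂ) • star ((a : M) * (a : M)) := by
            rw [star_smul, Complex.star_def, Complex.conj_ofReal]
          rw [star_add, star_neg, hst]
          simp only [add_mul, mul_add, neg_mul, mul_neg, neg_neg, smul_mul_assoc,
            mul_smul_comm, map_add, map_sub, map_neg, map_smul, smul_eq_mul, smul_smul]
          ring
        rw [hexp] at hq2
        have hsimp : (τ (star (-e) * (-e))).re = E := by
          simp [hEdef]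
        rw [hsimp] at hq2
        have hc1' : (τ (star e * ((a : M) * (a : M)))).re = E := by rw [hc1, hEdef]
        simp only [← Complex.ofReal_mul, Complex.add_re, Complex.sub_re, Complex.mul_re,
          Complex.ofReal_re, Complex.ofReal_im] at hq2
        have him1 : (τ (star e * ((a : M) * (a : M)))).im = (τ (star e * e)).im := by
          rw [hc1]
        nlinarith [hq2, hc1', hc2, hEim, him1, hμ, hXdef, hEdef]
      have hEle : E ≤ 0 := scale_nonpos hX0 key
      have hEeq : E = 0 := le_antisymm hEle hE0
      have hτe : τ (star e * e) = 0 := by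
        apply Complex.ext
        · rw [Complex.zero_re, ← hEdef, hEeq]
        · rw [Complex.zero_im, hEim]
      exact hτfaithfulD e heD hτe
    -- Step B: kernel is multiplicatively closed
    have hker : ∀ x y : ↥A, Φ x = 0 → Φ y = 0 → Φ (x * y) = 0 := by
      intro x y hx hy
      set e := Φ (x * y) with hedef
      have heD := hΦD (x * y)
      set dE : ↥A := ⟨star e, hDA (hDstar e heD)⟩ with hdE
      set b : ↥A := y * dE with hb
      have hΦb : Φ b = 0 := by
        have h1 := hΦbimod 1 (one_mem D) (star e) (hDstar e heD) y
        have he1 : (⟨1 * (y : M) * star e, mul_mem (mul_mem (hDA (one_mem D)) y.2)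
            (hDA (hDstar e heD))⟩ : ↥A) = b := by
          apply Subtype.ext; simp [hb, hdE]
        rw [he1] at h1
        rw [h1, hy]; simp
      have hxb : Φ (x * b) = e * star e := by
        have h1 := hΦbimod 1 (one_mem D) (star e) (hDstar e heD) (x * y)
        have he1 : (⟨1 * ((x * y : ↥A) : M) * star e,
            mul_mem (mul_mem (hDA (one_mem D)) (x * y).2) (hDA (hDstar e heD))⟩ : ↥A)
            = x * b := by
          apply Subtype.ext; push_cast [hb, hdE]; noncomm_ring
        rw [he1] at h1
        rw [h1, ← hedef]; simp
      have hJ : Φ (x * b) + Φ (b * x) = 0 := by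
        have h1 := hker2 (x + b) (by rw [map_add, hx, hΦb, add_zero])
        have h2 := hker2 x hx
        have h3 := hker2 b hΦb
        have hsq : (x + b) * (x + b) = x * x + (x * b + (b * x + b * b)) := by noncomm_ring
        rw [hsq, map_add, map_add, map_add, h2, h3] at h1
        simpa using h1
      have hΦbx : Φ (b * x) = -(e * star e) := by
        have h := hJ
        rw [hxb] at h
        exact eq_neg_of_add_eq_zero_right h
      have t1 : τ (Φ (b * x)) = τ ((b : M) * (x : M)) := by
        simpa using hΦτ (b * x)
      have t2 : τ ((b : M) * (x : M)) = τ (star e * ((x : M) * (y : M))) := by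
        have hbco : (b : M) = (y : M) * star e := by simp [hb, hdE]
        rw [hbco]
        calc τ ((y : M) * star e * (x : M)) = τ ((x : M) * ((y : M) * star e)) :=
              hτtr _ _
          _ = τ ((x : M) * (y : M) * star e) := by rw [mul_assoc]
          _ = τ (star e * ((x : M) * (y : M))) := hτtr _ _
      have t3 : τ (star e * ((x : M) * (y : M))) = τ (star e * e) := by
        simpa using hcrossτ (star e) (hDstar e heD) (x * y)
      have t4 : τ (e * star e) = τ (star e * e) := hτtr _ _
      have hhalf : -τ (star e * e) = τ (star e * e) := by
        have l : τ (Φ (b * x)) = -τ (star e * e) := by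
          rw [hΦbx, map_neg, t4]
        rw [t1, t2, t3] at l
        linear_combination -l
      have hzero : τ (star e * e) = 0 := by
        linear_combination -hhalf / 2
      exact hτfaithfulD e heD hzero
    -- Step C: conclude multiplicativity
    intro x y
    set xd : ↥A := ⟨Φ x, hDA (hΦD x)⟩ with hxd
    set yd : ↥A := ⟨Φ y, hDA (hΦD y)⟩ with hyd
    have hx0 : Φ (x - xd) = 0 := by
      rw [map_sub, hxd, hΦD' (Φ x) (hΦD x), sub_self]
    have hy0 : Φ (y - yd) = 0 := by
      rw [map_sub, hyd, hΦD' (Φ y) (hΦD y), sub_self]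
    have h1 : Φ ((x - xd) * (y - yd)) = 0 := hker _ _ hx0 hy0
    have h2 : Φ ((x - xd) * yd) = 0 := by
      have hb := hΦbimod 1 (one_mem D) (Φ y) (hΦD y) (x - xd)
      have he1 : (⟨1 * ((x - xd : ↥A) : M) * Φ y,
          mul_mem (mul_mem (hDA (one_mem D)) (x - xd).2) (hDA (hΦD y))⟩ : ↥A)
          = (x - xd) * yd := by
        apply Subtype.ext; push_cast [hxd, hyd]; noncomm_ring
      rw [he1] at hb
      rw [hb, hx0]; simp
    have h3 : Φ (xd * (y - yd)) = 0 := by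
      have hb := hΦbimod (Φ x) (hΦD x) 1 (one_mem D) (y - yd)
      have he1 : (⟨Φ x * ((y - yd : ↥A) : M) * 1,
          mul_mem (mul_mem (hDA (hΦD x)) (y - yd).2) (hDA (one_mem D))⟩ : ↥A)
          = xd * (y - yd) := by
        apply Subtype.ext; push_cast [hxd, hyd]; noncomm_ring
      rw [he1] at hb
      rw [hb, hy0]; simp
    have h4 : Φ (xd * yd) = Φ x * Φ y := by
      have he1 : xd * yd = ⟨Φ x * Φ y, hDA (mul_mem (hΦD x) (hΦD y))⟩ := by
        apply Subtype.ext; simp [hxd, hyd]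
      rw [he1]
      exact hΦD' (Φ x * Φ y) (mul_mem (hΦD x) (hΦD y))
    have hsplit : x * y
        = (x - xd) * (y - yd) + ((x - xd) * yd + (xd * (y - yd) + xd * yd)) := by
      noncomm_ring
    rw [hsplit, map_add, map_add, map_add, h1, h2, h3, h4, zero_add, zero_add, zero_add]
end

section
/- Let H be a complex Hilbert space and let (Sₙ), (Tₙ) be sequences of strict contractions in B(H) (‖Sₙ‖ < 1, ‖Tₙ‖ < 1 for all n). If either (i) ‖Sₙ − Tₙ‖ → 2, or (ii) there is a constant c < 1 with ‖Sₙ‖ ≤ c for all n and ‖Tₙ‖ → 1, then ρ(Sₙ, Tₙ) → ∞, where ρ is the hyperbolic distance on the open unit ball of B(H). -/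
/-- The inverse hyperbolic tangent `artanh t = (1/2)·log((1+t)/(1-t))`. -/
noncomputable def artanh (t : ℝ) : ℝ := Real.log ((1 + t) / (1 - t)) / 2

/-- `(1 - x x*)^{-1/2}`-type inverse square roots via the continuous functional calculus. -/
noncomputable def cfcInvSqrt {B : Type*} [CStarAlgebra B] (a : B) : B :=
  cfc (fun t : ℝ => (Real.sqrt t)⁻¹) a

/-- Square roots via the continuous functional calculus. -/
noncomputable def cfcSqrt {B : Type*} [CStarAlgebra B] (a : B) : B :=
  cfc Real.sqrt a

/-- The Möbius map `T_x(y) = (1 − x x*)^{-1/2} (x + y)(1 + x* y)^{-1} (1 − x* x)^{1/2}`. -/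
noncomputable def mobiusMap {B : Type*} [CStarAlgebra B] (x y : B) : B :=
  cfcInvSqrt (1 - x * star x) * (x + y) * Ring.inverse (1 + star x * y) *
    cfcSqrt (1 - star x * x)

/-- The hyperbolic distance
`ρ(x,y) = artanh ‖(1 − x x*)^{-1/2} (x − y)(1 − x* y)^{-1} (1 − x* x)^{1/2}‖ = artanh ‖T_{−x}(y)‖`
on the open unit ball of a unital C*-algebra. -/
noncomputable def hypDist {B : Type*} [CStarAlgebra B] (x y : B) : ℝ :=
  artanh ‖cfcInvSqrt (1 - x * star x) * (x - y) * Ring.inverse (1 - star x * y) *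
    cfcSqrt (1 - star x * x)‖

section CStar
variable {B : Type*} [CStarAlgebra B] [Nontrivial B]

lemma spec_icc {z : B} (hz : ‖z‖ < 1) :
    spectrum ℝ (1 - star z * z) ⊆ Set.Icc (1 - ‖z‖ ^ 2) 1 := by
  intro t ht
  have h1 : (1 : B) - star z * z = algebraMap ℝ B 1 - star z * z := by simp
  rw [h1, ← spectrum.singleton_sub_eq] at ht
  obtain ⟨r, hr, s, hs, hrs⟩ := ht
  rw [Set.eq_of_mem_singleton hr] at hrs
  have h0 : 0 ≤ s := spectrum_star_mul_self_nonneg s hs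
  have h2 : s ≤ ‖z‖ ^ 2 := by
    have := spectrum.norm_le_norm_of_mem hs
    rw [Real.norm_eq_abs, abs_of_nonneg h0, CStarRing.norm_star_mul_self] at this
    simpa [sq] using this
  simp only [← hrs]
  constructor <;> [linarith; linarith]

omit [Nontrivial B] in
lemma selfadj_one_sub_star_mul_self (z : B) : IsSelfAdjoint (1 - star z * z) := by
  rw [IsSelfAdjoint]
  simp [star_sub]

variable {a : B} {ε : ℝ}

section
variable (hsa : IsSelfAdjoint a) (hε : 0 < ε) (hspec : spectrum ℝ a ⊆ Set.Icc ε 1)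
include hsa hε hspec

omit hsa in
lemma contOn_invSqrt : ContinuousOn (fun t : ℝ => (Real.sqrt t)⁻¹) (spectrum ℝ a) := by
  apply ContinuousOn.inv₀ (Real.continuous_sqrt.continuousOn)
  intro t ht
  have h0 := hspec ht
  have h1 : 0 < t := lt_of_lt_of_le hε h0.1
  positivity

omit hε in
lemma cfcSqrt_mul_self (hε' : 0 ≤ ε) : cfcSqrt a * cfcSqrt a = a := by
  rw [cfcSqrt, ← cfc_mul _ _ a]
  rw (occs := .pos [2]) [← cfc_id ℝ a]
  exact cfc_congr fun t ht => Real.mul_self_sqrt (le_trans hε' (hspec ht).1)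

lemma cfcInvSqrt_mul_cfcSqrt : cfcInvSqrt a * cfcSqrt a = 1 := by
  rw [cfcSqrt, cfcInvSqrt, ← cfc_mul _ _ a (contOn_invSqrt hε hspec)]
  rw [← cfc_one ℝ a]
  refine cfc_congr fun t ht => ?_
  have h1 : 0 < t := lt_of_lt_of_le hε (hspec ht).1
  field_simp [Real.sqrt_ne_zero'.2 h1]
  rfl

lemma cfcSqrt_mul_cfcInvSqrt : cfcSqrt a * cfcInvSqrt a = 1 := by
  rw [cfcSqrt, cfcInvSqrt,
    ← cfc_mul _ _ a Real.continuous_sqrt.continuousOn (contOn_invSqrt hε hspec)]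
  rw [← cfc_one ℝ a]
  refine cfc_congr fun t ht => ?_
  have h1 : 0 < t := lt_of_lt_of_le hε (hspec ht).1
  field_simp [Real.sqrt_ne_zero'.2 h1]
  rfl

omit hsa hε in
lemma norm_cfcSqrt_le : ‖cfcSqrt a‖ ≤ 1 := by
  apply norm_cfc_le zero_le_one
  intro t ht
  rw [Real.norm_eq_abs, abs_of_nonneg (Real.sqrt_nonneg t)]
  exact Real.sqrt_le_one.mpr (hspec ht).2
end

end CStar

lemma core_identity {B : Type*} [Ring B] [StarRing B] (x y E F : B)
    (hE : E * (1 - star x * x) = 1) (hE' : (1 - star x * x) * E = 1)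
    (hF : F * (1 - x * star x) = 1) (hF' : (1 - x * star x) * F = 1) :
    (1 - star y * x) * E * (1 - star x * y)
      = (star x - star y) * F * (x - y) + 1 - star y * y := by
  have e1 : x * E = F * x := by
    calc x * E = F * ((1 - x * star x) * (x * E)) := by rw [← mul_assoc, hF, one_mul]
      _ = F * (x * ((1 - star x * x) * E)) := by noncomm_ring
      _ = F * x := by rw [hE', mul_one]
  have e2 : E * star x = star x * F := by
    symm
    calc star x * F = E * ((1 - star x * x) * (star x * F)) := by rw [← mul_assoc, hE, one_mul]
      _ = E * (star x * ((1 - x * star x) * F)) := by noncomm_ring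
      _ = E * star x := by rw [hF', mul_one]
  have e3 : star x * (F * x) = E - 1 := by
    calc star x * (F * x) = star x * (x * E) := by rw [← e1]
      _ = (1 - (1 - star x * x)) * E := by noncomm_ring
      _ = E - 1 := by rw [sub_mul, one_mul, hE']
  have e4 : x * (E * star x) = F - 1 := by
    calc x * (E * star x) = x * (star x * F) := by rw [e2]
      _ = (1 - (1 - x * star x)) * F := by noncomm_ring
      _ = F - 1 := by rw [sub_mul, one_mul, hF']
  calc (1 - star y * x) * E * (1 - star x * y)
      = E - E * star x * y - star y * (x * E) + star y * (x * (E * star x)) * y := by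
        noncomm_ring
    _ = E - (star x * F) * y - star y * (F * x) + star y * (F - 1) * y := by
        rw [e4, e2, e1]
    _ = (E - 1) - star x * F * y - star y * (F * x) + star y * F * y + 1 - star y * y := by
        noncomm_ring
    _ = star x * (F * x) - star x * F * y - star y * (F * x) + star y * F * y + 1
          - star y * y := by rw [e3]
    _ = (star x - star y) * F * (x - y) + 1 - star y * y := by noncomm_ring

section Facts
variable {B : Type*} [CStarAlgebra B] [Nontrivial B]

lemma mobius_facts (x y : B) (hx : ‖x‖ < 1) (hy : ‖y‖ < 1) :
    (star (cfcInvSqrt (1 - x * star x) * (x - y) * Ring.inverse (1 - star x * y) *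
        cfcSqrt (1 - star x * x)) *
      (cfcInvSqrt (1 - x * star x) * (x - y) * Ring.inverse (1 - star x * y) *
        cfcSqrt (1 - star x * x))
      + (star (Ring.inverse (1 - star x * y) * cfcSqrt (1 - star x * x)) *
          (Ring.inverse (1 - star x * y) * cfcSqrt (1 - star x * x))
        - star (y * (Ring.inverse (1 - star x * y) * cfcSqrt (1 - star x * x))) *
          (y * (Ring.inverse (1 - star x * y) * cfcSqrt (1 - star x * x)))) = 1)
    ∧ (cfcInvSqrt (1 - star x * x) * (1 - star x * y)) *
        (Ring.inverse (1 - star x * y) * cfcSqrt (1 - star x * x)) = 1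
    ∧ (Ring.inverse (1 - star x * y) * cfcSqrt (1 - star x * x)) *
        (cfcInvSqrt (1 - star x * x) * (1 - star x * y)) = 1
    ∧ cfcSqrt (1 - star x * x) * cfcInvSqrt (1 - star x * x) = 1
    ∧ ‖cfcSqrt (1 - star x * x)‖ ≤ 1 := by
  have hx2 : (0:ℝ) < 1 - ‖x‖ ^ 2 := by nlinarith [norm_nonneg x]
  -- q-side facts
  have hq_sa : IsSelfAdjoint ((1:B) - star x * x) := selfadj_one_sub_star_mul_self x
  have hq_spec := spec_icc hx
  set q : B := 1 - star x * x with hq_def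
  set C : B := cfcSqrt q with hC_def
  set Aq : B := cfcInvSqrt q with hAq_def
  have hC2 : C * C = q := cfcSqrt_mul_self hq_sa hq_spec hx2.le
  have hAqC : Aq * C = 1 := cfcInvSqrt_mul_cfcSqrt hq_sa hx2 hq_spec
  have hCAq : C * Aq = 1 := cfcSqrt_mul_cfcInvSqrt hq_sa hx2 hq_spec
  have hC_norm : ‖C‖ ≤ 1 := norm_cfcSqrt_le hq_spec
  have hC_sa : IsSelfAdjoint C := cfc_predicate _ q
  -- p-side facts
  have hp_eq : (1:B) - x * star x = 1 - star (star x) * star x := by rw [star_star]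
  have hp_sa : IsSelfAdjoint ((1:B) - x * star x) := by
    rw [hp_eq]; exact selfadj_one_sub_star_mul_self (star x)
  have hp_spec : spectrum ℝ ((1:B) - x * star x) ⊆ Set.Icc (1 - ‖x‖ ^ 2) 1 := by
    rw [hp_eq]
    simpa [norm_star] using spec_icc (z := star x) (by simpa [norm_star] using hx)
  set p : B := 1 - x * star x with hp_def
  set Sp : B := cfcSqrt p with hSp_def
  set Ap : B := cfcInvSqrt p with hAp_def
  have hSp2 : Sp * Sp = p := cfcSqrt_mul_self hp_sa hp_spec hx2.le
  have hApSp : Ap * Sp = 1 := cfcInvSqrt_mul_cfcSqrt hp_sa hx2 hp_spec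
  have hSpAp : Sp * Ap = 1 := cfcSqrt_mul_cfcInvSqrt hp_sa hx2 hp_spec
  have hAp_sa : IsSelfAdjoint Ap := cfc_predicate _ p
  -- inverses of q and p
  have hE : (Aq * Aq) * q = 1 := by
    rw [← hC2, show (Aq * Aq) * (C * C) = Aq * ((Aq * C) * C) from by noncomm_ring,
      hAqC, one_mul, hAqC]
  have hE' : q * (Aq * Aq) = 1 := by
    rw [← hC2, show (C * C) * (Aq * Aq) = C * ((C * Aq) * Aq) from by noncomm_ring,
      hCAq, one_mul, hCAq]
  have hF : (Ap * Ap) * p = 1 := by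
    rw [← hSp2, show (Ap * Ap) * (Sp * Sp) = Ap * ((Ap * Sp) * Sp) from by noncomm_ring,
      hApSp, one_mul, hApSp]
  have hF' : p * (Ap * Ap) = 1 := by
    rw [← hSp2, show (Sp * Sp) * (Ap * Ap) = Sp * ((Sp * Ap) * Ap) from by noncomm_ring,
      hSpAp, one_mul, hSpAp]
  -- the resolvent facts
  have hwn : ‖star x * y‖ < 1 := by
    calc ‖star x * y‖ ≤ ‖star x‖ * ‖y‖ := norm_mul_le _ _
      _ ≤ ‖x‖ * 1 := by rw [norm_star]; exact mul_le_mul_of_nonneg_left hy.le (norm_nonneg x)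
      _ < 1 := by rw [mul_one]; exact hx
  have hw'n : ‖star y * x‖ < 1 := by
    calc ‖star y * x‖ ≤ ‖star y‖ * ‖x‖ := norm_mul_le _ _
      _ ≤ 1 * ‖x‖ := by rw [norm_star]; exact mul_le_mul_of_nonneg_right hy.le (norm_nonneg x)
      _ < 1 := by rw [one_mul]; exact hx
  have hwu : IsUnit ((1:B) - star x * y) := isUnit_one_sub_of_norm_lt_one hwn
  have hw'u : IsUnit ((1:B) - star y * x) := isUnit_one_sub_of_norm_lt_one hw'n
  set R : B := Ring.inverse (1 - star x * y) with hR_def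
  set R' : B := Ring.inverse (1 - star y * x) with hR'_def
  have hR : (1 - star x * y) * R = 1 := Ring.mul_inverse_cancel _ hwu
  have hR2 : R * (1 - star x * y) = 1 := Ring.inverse_mul_cancel _ hwu
  have hR' : R' * (1 - star y * x) = 1 := Ring.inverse_mul_cancel _ hw'u
  have hstar_w : star ((1:B) - star x * y) = 1 - star y * x := by
    simp [star_sub, star_mul]
  have hRstar : star R = R' := by
    have h1 : (1 - star y * x) * star R = 1 := by
      rw [← hstar_w, ← star_mul, hR2, star_one]
    calc star R = (R' * (1 - star y * x)) * star R := by rw [hR', one_mul]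
      _ = R' * ((1 - star y * x) * star R) := by rw [mul_assoc]
      _ = R' := by rw [h1, mul_one]
  -- core identity
  have hcore := core_identity x y (Aq * Aq) (Ap * Ap) hE hE' hF hF'
  refine ⟨?_, ?_, ?_, hCAq, hC_norm⟩
  · -- main identity
    have hsu : star (R * C) = C * R' := by rw [star_mul, hC_sa.star_eq, hRstar]
    have hsM : star (Ap * (x - y) * R * C) = C * (R' * ((star x - star y) * Ap)) := by
      simp only [star_mul, star_sub, hC_sa.star_eq, hAp_sa.star_eq, hRstar, mul_assoc]
    have hsyu : star (y * (R * C)) = (C * R') * star y := by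
      rw [star_mul, hsu]
    calc star (Ap * (x - y) * R * C) * (Ap * (x - y) * R * C)
          + (star (R * C) * (R * C) - star (y * (R * C)) * (y * (R * C)))
        = C * (R' * ((((star x - star y) * (Ap * Ap) * (x - y)) + 1 - star y * y)
            * (R * C))) := by
          rw [hsM, hsu, hsyu]; noncomm_ring
      _ = C * (R' * ((((1 - star y * x) * (Aq * Aq) * (1 - star x * y))) * (R * C))) := by
          rw [hcore]
      _ = C * ((R' * (1 - star y * x)) * (Aq * Aq) * ((1 - star x * y) * R) * C) := by
          noncomm_ring
      _ = (C * Aq) * (Aq * C) := by rw [hR', hR]; noncomm_ring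
      _ = 1 := by rw [hCAq, hAqC, one_mul]
  · -- u' * u = 1
    calc (Aq * (1 - star x * y)) * (R * C)
        = Aq * (((1 - star x * y) * R) * C) := by noncomm_ring
      _ = Aq * C := by rw [hR, one_mul]
      _ = 1 := hAqC
  · -- u * u' = 1
    calc (R * C) * (Aq * (1 - star x * y))
        = R * ((C * Aq) * (1 - star x * y)) := by noncomm_ring
      _ = R * (1 - star x * y) := by rw [hCAq, one_mul]
      _ = 1 := hR2
end Facts
open scoped InnerProductSpace

section Hilbert
variable {H : Type*} [NormedAddCommGroup H] [InnerProductSpace ℂ H] [CompleteSpace H]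
  [Nontrivial H]

set_option maxHeartbeats 2000000 in
lemma key_estimate (x y : H →L[ℂ] H) (hx : ‖x‖ < 1) (hy : ‖y‖ < 1) :
    ‖cfcInvSqrt (1 - x * star x) * (x - y) * Ring.inverse (1 - star x * y) *
      cfcSqrt (1 - star x * x)‖ < 1 ∧
    ∀ η : H, ‖η‖ = 1 →
      (1 - ‖cfcInvSqrt (1 - x * star x) * (x - y) * Ring.inverse (1 - star x * y) *
        cfcSqrt (1 - star x * x)‖ ^ 2) * ‖((1 : H →L[ℂ] H) - star x * y) η‖ ^ 2
        ≤ 1 - ‖y η‖ ^ 2 := by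
  obtain ⟨hI, hu'u, huu', hCAq, hC_norm⟩ := mobius_facts x y hx hy
  set M : H →L[ℂ] H := cfcInvSqrt (1 - x * star x) * (x - y) * Ring.inverse (1 - star x * y) *
    cfcSqrt (1 - star x * x) with hM_def
  set u : H →L[ℂ] H := Ring.inverse (1 - star x * y) * cfcSqrt (1 - star x * x) with hu_def
  set u' : H →L[ℂ] H := cfcInvSqrt (1 - star x * x) * (1 - star x * y) with hu'_def
  -- pointwise identity
  have hpt : ∀ ξ : H, ‖M ξ‖ ^ 2 + (‖u ξ‖ ^ 2 - ‖y (u ξ)‖ ^ 2) = ‖ξ‖ ^ 2 := by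
    intro ξ
    have hvv : ∀ v : H →L[ℂ] H,
        RCLike.re ⟪(star v * v) ξ, ξ⟫_ℂ = ‖v ξ‖ ^ 2 := by
      intro v
      rw [ContinuousLinearMap.mul_apply, ContinuousLinearMap.star_eq_adjoint,
        ContinuousLinearMap.adjoint_inner_left, inner_self_eq_norm_sq]
    have h0 := congrArg (fun v : H →L[ℂ] H => RCLike.re (K := ℂ) ⟪v ξ, ξ⟫_ℂ) hI
    simp only [ContinuousLinearMap.add_apply, ContinuousLinearMap.sub_apply,
      inner_add_left, inner_sub_left, map_add, map_sub] at h0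
    simp only [hvv] at h0
    simp only [ContinuousLinearMap.mul_apply, ContinuousLinearMap.one_apply,
      inner_self_eq_norm_sq] at h0
    exact h0
  -- lower bound on ‖u ξ‖
  have hu'ξ : ∀ ξ : H, ‖ξ‖ ≤ ‖u'‖ * ‖u ξ‖ := by
    intro ξ
    have h1 : u' (u ξ) = ξ := by
      rw [← ContinuousLinearMap.mul_apply, hu'u, ContinuousLinearMap.one_apply]
    calc ‖ξ‖ = ‖u' (u ξ)‖ := by rw [h1]
      _ ≤ ‖u'‖ * ‖u ξ‖ := u'.le_opNorm _
  have hu'pos : 0 < ‖u'‖ := by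
    rw [norm_pos_iff]
    intro h0
    apply one_ne_zero (α := H →L[ℂ] H)
    rw [← hu'u, h0, zero_mul]
  have hy2 : (0:ℝ) ≤ 1 - ‖y‖ ^ 2 := by nlinarith [norm_nonneg y]
  have hbound : ∀ ξ : H, ‖M ξ‖ ^ 2 ≤ (1 - (1 - ‖y‖ ^ 2) / ‖u'‖ ^ 2) * ‖ξ‖ ^ 2 := by
    intro ξ
    have h1 := hpt ξ
    have h2 : ‖y (u ξ)‖ ≤ ‖y‖ * ‖u ξ‖ := y.le_opNorm _
    have h4 : ‖ξ‖ ^ 2 ≤ ‖u'‖ ^ 2 * ‖u ξ‖ ^ 2 := by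
      nlinarith [hu'ξ ξ, norm_nonneg ξ, norm_nonneg (u ξ), hu'pos.le]
    have h5 : ‖y (u ξ)‖ ^ 2 ≤ ‖y‖ ^ 2 * ‖u ξ‖ ^ 2 := by
      nlinarith [norm_nonneg (y (u ξ)), norm_nonneg (u ξ), norm_nonneg y]
    have h6 : (1 - ‖y‖ ^ 2) / ‖u'‖ ^ 2 * ‖ξ‖ ^ 2 ≤ (1 - ‖y‖ ^ 2) * ‖u ξ‖ ^ 2 := by
      rw [div_mul_eq_mul_div, div_le_iff₀ (by positivity)]
      nlinarith [mul_le_mul_of_nonneg_left h4 hy2]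
    nlinarith [h1, h5, h6]
  have hκ0 : (0:ℝ) ≤ 1 - (1 - ‖y‖ ^ 2) / ‖u'‖ ^ 2 := by
    obtain ⟨v, hv⟩ := exists_ne (0 : H)
    have hvn : (0:ℝ) < ‖v‖ := norm_pos_iff.mpr hv
    nlinarith [hbound v, norm_nonneg (M v), mul_pos hvn hvn, sq_nonneg ‖v‖]
  have hκ1 : 1 - (1 - ‖y‖ ^ 2) / ‖u'‖ ^ 2 < 1 := by
    have : 0 < (1 - ‖y‖ ^ 2) / ‖u'‖ ^ 2 :=
      div_pos (by nlinarith [norm_nonneg y]) (by positivity)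
    linarith
  have hMlt : ‖M‖ < 1 := by
    have hle : ‖M‖ ≤ Real.sqrt (1 - (1 - ‖y‖ ^ 2) / ‖u'‖ ^ 2) := by
      apply ContinuousLinearMap.opNorm_le_bound _ (Real.sqrt_nonneg _)
      intro ξ
      rw [show ‖M ξ‖ = Real.sqrt (‖M ξ‖ ^ 2) from (Real.sqrt_sq (norm_nonneg _)).symm]
      calc Real.sqrt (‖M ξ‖ ^ 2)
          ≤ Real.sqrt ((1 - (1 - ‖y‖ ^ 2) / ‖u'‖ ^ 2) * ‖ξ‖ ^ 2) :=
            Real.sqrt_le_sqrt (hbound ξ)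
        _ = Real.sqrt (1 - (1 - ‖y‖ ^ 2) / ‖u'‖ ^ 2) * ‖ξ‖ := by
            rw [Real.sqrt_mul hκ0, Real.sqrt_sq (norm_nonneg _)]
    refine lt_of_le_of_lt hle ?_
    have := Real.sqrt_lt_sqrt hκ0 hκ1
    simpa using this
  refine ⟨hMlt, ?_⟩
  intro η hη
  set ξ : H := u' η with hξ_def
  have huξ : u ξ = η := by
    rw [hξ_def, ← ContinuousLinearMap.mul_apply, huu', ContinuousLinearMap.one_apply]
  have h1 := hpt ξ
  rw [huξ, hη] at h1
  have h2 : ‖M ξ‖ ≤ ‖M‖ * ‖ξ‖ := M.le_opNorm _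
  have h3 : ‖M ξ‖ ^ 2 ≤ ‖M‖ ^ 2 * ‖ξ‖ ^ 2 := by
    nlinarith [norm_nonneg (M ξ), norm_nonneg ξ, norm_nonneg M]
  have h4 : ‖((1 : H →L[ℂ] H) - star x * y) η‖ ≤ ‖ξ‖ := by
    have e1 : ξ = cfcInvSqrt (1 - star x * x) (((1 : H →L[ℂ] H) - star x * y) η) := by
      rw [hξ_def, hu'_def, ContinuousLinearMap.mul_apply]
    have e2 : ((1 : H →L[ℂ] H) - star x * y) η
        = cfcSqrt (1 - star x * x) (cfcInvSqrt (1 - star x * x)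
            (((1 : H →L[ℂ] H) - star x * y) η)) := by
      rw [← ContinuousLinearMap.mul_apply, hCAq, ContinuousLinearMap.one_apply]
    calc ‖((1 : H →L[ℂ] H) - star x * y) η‖
        = ‖cfcSqrt (1 - star x * x) (cfcInvSqrt (1 - star x * x)
            (((1 : H →L[ℂ] H) - star x * y) η))‖ := by rw [← e2]
      _ ≤ ‖cfcSqrt (1 - star x * x)‖ * ‖cfcInvSqrt (1 - star x * x)
            (((1 : H →L[ℂ] H) - star x * y) η)‖ := ContinuousLinearMap.le_opNorm _ _
      _ ≤ 1 * ‖ξ‖ := by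
          rw [e1]
          exact mul_le_mul_of_nonneg_right hC_norm (norm_nonneg _)
      _ = ‖ξ‖ := one_mul _
  have h5 : (1 - ‖M‖ ^ 2) * ‖ξ‖ ^ 2 ≤ 1 - ‖y η‖ ^ 2 := by nlinarith [h1, h3]
  have h6 : (0:ℝ) ≤ 1 - ‖M‖ ^ 2 := by nlinarith [norm_nonneg M, hMlt]
  have h7 : ‖((1 : H →L[ℂ] H) - star x * y) η‖ ^ 2 ≤ ‖ξ‖ ^ 2 := by
    nlinarith [norm_nonneg (((1 : H →L[ℂ] H) - star x * y) η), norm_nonneg ξ]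
  nlinarith [h5, mul_le_mul_of_nonneg_left h7 h6]
end Hilbert


open Filter

lemma artanh_tendsto {t : ℕ → ℝ} (h0 : ∀ n, 0 ≤ t n) (h1 : ∀ n, t n < 1)
    (h2 : Tendsto (fun n => 1 - t n ^ 2) atTop (nhds 0)) :
    Tendsto (fun n => artanh (t n)) atTop atTop := by
  have ha : ∀ n, 1 - t n ≤ 1 - t n ^ 2 := fun n => by nlinarith [h0 n, h1 n]
  have hb : Tendsto (fun n => 1 - t n) atTop (nhds 0) :=
    squeeze_zero (fun n => by linarith [h1 n]) ha h2
  have hc : Tendsto (fun n => 1 - t n) atTop (nhdsWithin 0 (Set.Ioi 0)) :=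
    tendsto_nhdsWithin_of_tendsto_nhds_of_eventually_within _ hb
      (Eventually.of_forall fun n => by simp only [Set.mem_Ioi]; linarith [h1 n])
  have hd : Tendsto (fun n => Real.log (1 - t n)) atTop atBot :=
    Real.tendsto_log_nhdsGT_zero.comp hc
  have he : Tendsto (fun n => -Real.log (1 - t n) / 2) atTop atTop := by
    apply Tendsto.atTop_div_const (by norm_num : (0:ℝ) < 2)
    exact tendsto_neg_atBot_atTop.comp hd
  apply tendsto_atTop_mono' atTop ?_ he
  filter_upwards with n
  have h3 : (0:ℝ) < 1 + t n := by linarith [h0 n]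
  have h4 : (0:ℝ) < 1 - t n := by linarith [h1 n]
  rw [artanh, Real.log_div (by linarith) (by linarith)]
  have h5 : 0 ≤ Real.log (1 + t n) := Real.log_nonneg (by linarith [h0 n])
  linarith


section Hilbert
variable {H : Type*} [NormedAddCommGroup H] [InnerProductSpace ℂ H] [CompleteSpace H]
  [Nontrivial H]

omit [CompleteSpace H] in
lemma exists_unit_vector' : ∃ η : H, ‖η‖ = 1 := by
  obtain ⟨v, hv⟩ := exists_ne (0 : H)
  refine ⟨((‖v‖⁻¹ : ℝ) : ℂ) • v, ?_⟩
  rw [norm_smul, Complex.norm_real, Real.norm_eq_abs, abs_of_nonneg (by positivity),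
    inv_mul_cancel₀ (norm_ne_zero_iff.mpr hv)]

lemma exists_unit_vector (f : H →L[ℂ] H) {c : ℝ} (hc : c < ‖f‖) :
    ∃ η : H, ‖η‖ = 1 ∧ c < ‖f η‖ := by
  by_contra hcon
  push_neg at hcon
  obtain ⟨η₀, hη₀⟩ := exists_unit_vector' (H := H)
  have hc0 : 0 ≤ c := le_trans (norm_nonneg _) (hcon η₀ hη₀)
  have : ‖f‖ ≤ c := by
    apply ContinuousLinearMap.opNorm_le_bound _ hc0
    intro ξ
    rcases eq_or_ne ξ 0 with rfl | hξ
    · simp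
    · have hpos : (0:ℝ) < ‖ξ‖ := norm_pos_iff.mpr hξ
      have h1 : ‖((‖ξ‖⁻¹ : ℝ) : ℂ) • ξ‖ = 1 := by
        rw [norm_smul, Complex.norm_real, Real.norm_eq_abs, abs_of_nonneg (by positivity),
          inv_mul_cancel₀ hpos.ne']
      have h2 := hcon _ h1
      rw [map_smul, norm_smul, Complex.norm_real, Real.norm_eq_abs,
        abs_of_nonneg (by positivity)] at h2
      calc ‖f ξ‖ = ‖ξ‖ * (‖ξ‖⁻¹ * ‖f ξ‖) := by field_simp
        _ ≤ ‖ξ‖ * c := mul_le_mul_of_nonneg_left h2 hpos.le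
        _ = c * ‖ξ‖ := mul_comm _ _
  linarith
end Hilbert

set_option maxHeartbeats 1000000 in
/-- Let `(Sₙ)`, `(Tₙ)` be sequences of strict contractions on a complex Hilbert
space `H`. If either `‖Sₙ − Tₙ‖ → 2`, or there is `c < 1` with `‖Sₙ‖ ≤ c` for all `n` and
`‖Tₙ‖ → 1`, then `ρ(Sₙ, Tₙ) → ∞` for the hyperbolic distance `ρ` on the open unit ball of
`B(H)`. -/
theorem hypDist_tendsto_atTop
    {H : Type*} [NormedAddCommGroup H] [InnerProductSpace ℂ H] [CompleteSpace H]
    (S T : ℕ → H →L[ℂ] H)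
    (hS : ∀ n, ‖S n‖ < 1) (hT : ∀ n, ‖T n‖ < 1)
    (h : Tendsto (fun n => ‖S n - T n‖) atTop (nhds 2) ∨
      ∃ c : ℝ, c < 1 ∧ (∀ n, ‖S n‖ ≤ c) ∧ Tendsto (fun n => ‖T n‖) atTop (nhds 1)) :
    Tendsto (fun n => hypDist (S n) (T n)) atTop atTop := by
  rcases subsingleton_or_nontrivial H with hsub | hnt
  · -- trivial space: hypotheses are contradictory
    exfalso
    have hz : ∀ f : H →L[ℂ] H, ‖f‖ = 0 := by
      intro f
      have : f = 0 := by ext v; exact Subsingleton.elim _ _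
      rw [this, norm_zero]
    rcases h with h1 | ⟨c, _, _, h1⟩
    · have h2 : Tendsto (fun _ : ℕ => (0:ℝ)) atTop (nhds 2) := by
        simpa [hz] using h1
      have := tendsto_nhds_unique h2 tendsto_const_nhds
      norm_num at this
    · have h2 : Tendsto (fun _ : ℕ => (0:ℝ)) atTop (nhds 1) := by
        simpa [hz] using h1
      have := tendsto_nhds_unique h2 tendsto_const_nhds
      norm_num at this
  · -- main case
    set t : ℕ → ℝ := fun n =>
      ‖cfcInvSqrt (1 - S n * star (S n)) * (S n - T n) *
        Ring.inverse (1 - star (S n) * T n) * cfcSqrt (1 - star (S n) * S n)‖ with ht_def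
    have hkey := fun n => key_estimate (S n) (T n) (hS n) (hT n)
    have ht0 : ∀ n, 0 ≤ t n := fun n => norm_nonneg _
    have ht1 : ∀ n, t n < 1 := fun n => (hkey n).1
    have hmain : Tendsto (fun n => 1 - t n ^ 2) atTop (nhds 0) := by
      rcases h with h1 | ⟨c, hc1, hc2, h1⟩
      · -- case (i)
        have hch : ∀ n : ℕ, ∃ η : H, ‖η‖ = 1 ∧ ‖S n - T n‖ - 1/(n+1) < ‖(S n - T n) η‖ := by
          intro n
          apply exists_unit_vector
          have : (0:ℝ) < 1/(n+1) := by positivity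
          linarith
        choose η hη1 hη2 using hch
        set d : ℕ → ℝ := fun n => ‖(S n - T n) (η n)‖ with hd_def
        have hdle : ∀ n, d n ≤ ‖S n - T n‖ := by
          intro n
          calc d n ≤ ‖S n - T n‖ * ‖η n‖ := ContinuousLinearMap.le_opNorm _ _
            _ = ‖S n - T n‖ := by rw [hη1 n, mul_one]
        have hd2 : Tendsto d atTop (nhds 2) := by
          have hlow : Tendsto (fun n : ℕ => ‖S n - T n‖ - 1/(n+1)) atTop (nhds 2) := by
            have := h1.sub tendsto_one_div_add_atTop_nhds_zero_nat
            simpa using this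
          exact tendsto_of_tendsto_of_tendsto_of_le_of_le hlow h1
            (fun n => (hη2 n).le) hdle
        have hev : ∀ᶠ n in atTop, (3/2 : ℝ) < d n :=
          hd2.eventually (eventually_gt_nhds (by norm_num))
        have hb : Tendsto (fun n => 1 - (d n - 1)^2) atTop (nhds 0) := by
          have : Tendsto (fun n => (d n - 1)^2) atTop (nhds 1) := by
            have h2 : Tendsto (fun n => d n - 1) atTop (nhds 1) := by
              have := hd2.sub (tendsto_const_nhds (x := (1:ℝ)))
              norm_num at this
              exact this
            simpa using h2.pow 2
          simpa using (tendsto_const_nhds (x := (1:ℝ))).sub this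
        apply squeeze_zero' ?_ ?_ hb
        · filter_upwards with n
          nlinarith [ht1 n, ht0 n]
        · filter_upwards [hev] with n hn
          -- per-n estimate
          have hk := (hkey n).2 (η n) (hη1 n)
          set w : H := ((1 : H →L[ℂ] H) - star (S n) * T n) (η n) with hw_def
          have hSη : ‖S n (η n)‖ ≤ 1 := by
            calc ‖S n (η n)‖ ≤ ‖S n‖ * ‖η n‖ := ContinuousLinearMap.le_opNorm _ _
              _ ≤ 1 := by rw [hη1 n, mul_one]; exact (hS n).le
          have hTη : ‖T n (η n)‖ ≤ 1 := by
            calc ‖T n (η n)‖ ≤ ‖T n‖ * ‖η n‖ := ContinuousLinearMap.le_opNorm _ _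
              _ ≤ 1 := by rw [hη1 n, mul_one]; exact (hT n).le
          have hsub : (S n - T n) (η n) = S n (η n) - T n (η n) :=
            ContinuousLinearMap.sub_apply _ _ _
          have hdn : d n ≤ ‖S n (η n)‖ + ‖T n (η n)‖ := by
            rw [hd_def]
            simp only [hsub]
            exact norm_sub_le _ _
          have hTlow : d n - 1 ≤ ‖T n (η n)‖ := by linarith
          -- lower bound on ‖w‖
          have hwlow : d n ^ 2 / 2 ≤ ‖w‖ := by
            have e1 : RCLike.re (K := ℂ) ⟪w, η n⟫_ℂ
                = 1 - RCLike.re (K := ℂ) ⟪T n (η n), S n (η n)⟫_ℂ := by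
              rw [hw_def]
              simp only [ContinuousLinearMap.sub_apply, ContinuousLinearMap.one_apply,
                ContinuousLinearMap.mul_apply, inner_sub_left, map_sub,
                ContinuousLinearMap.star_eq_adjoint, ContinuousLinearMap.adjoint_inner_left]
              rw [inner_self_eq_norm_sq, hη1 n]
              norm_num
            have e2 : ‖S n (η n) - T n (η n)‖^2 = ‖S n (η n)‖^2
                - 2 * RCLike.re (K := ℂ) ⟪S n (η n), T n (η n)⟫_ℂ + ‖T n (η n)‖^2 :=
              norm_sub_sq _ _
            have e3 : RCLike.re (K := ℂ) ⟪T n (η n), S n (η n)⟫_ℂ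
                = RCLike.re (K := ℂ) ⟪S n (η n), T n (η n)⟫_ℂ := inner_re_symm _ _
            have e4 : RCLike.re (K := ℂ) ⟪w, η n⟫_ℂ ≤ ‖w‖ := by
              calc RCLike.re (K := ℂ) ⟪w, η n⟫_ℂ ≤ ‖w‖ * ‖η n‖ := re_inner_le_norm _ _
                _ = ‖w‖ := by rw [hη1 n, mul_one]
            have e5 : d n ^ 2 = ‖S n (η n) - T n (η n)‖^2 := by simp only [hd_def, hsub]
            nlinarith [e1, e2, e3, e4, e5, hSη, hTη]
          have hw2 : 1 ≤ ‖w‖ ^ 2 := by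
            nlinarith [hwlow, hn, sq_nonneg (d n - 3/2), sq_nonneg (‖w‖ - 9/8), norm_nonneg w]
          have h6 : (0:ℝ) ≤ 1 - t n ^ 2 := by nlinarith [ht1 n, ht0 n]
          have h7 : 1 - ‖T n (η n)‖^2 ≤ 1 - (d n - 1)^2 := by nlinarith
          have hk' : (1 - t n ^ 2) * ‖w‖ ^ 2 ≤ 1 - ‖T n (η n)‖ ^ 2 := hk
          nlinarith [hk', mul_le_mul_of_nonneg_left hw2 h6]
      · -- case (ii)
        have hc0 : (0:ℝ) ≤ c := le_trans (norm_nonneg (S 0)) (hc2 0)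
        have hch : ∀ n : ℕ, ∃ η : H, ‖η‖ = 1 ∧ ‖T n‖ - 1/(n+1) < ‖T n η‖ := by
          intro n
          apply exists_unit_vector
          have : (0:ℝ) < 1/(n+1) := by positivity
          linarith
        choose η hη1 hη2 using hch
        set e : ℕ → ℝ := fun n => ‖T n (η n)‖ with he_def
        have hele : ∀ n, e n ≤ ‖T n‖ := by
          intro n
          calc e n ≤ ‖T n‖ * ‖η n‖ := ContinuousLinearMap.le_opNorm _ _
            _ = ‖T n‖ := by rw [hη1 n, mul_one]
        have he1 : Tendsto e atTop (nhds 1) := by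
          have hlow : Tendsto (fun n : ℕ => ‖T n‖ - 1/(n+1)) atTop (nhds 1) := by
            have := h1.sub tendsto_one_div_add_atTop_nhds_zero_nat
            simpa using this
          exact tendsto_of_tendsto_of_tendsto_of_le_of_le hlow h1
            (fun n => (hη2 n).le) hele
        have hb : Tendsto (fun n => (1 - e n ^ 2) / (1 - c)^2) atTop (nhds 0) := by
          have h2 : Tendsto (fun n => 1 - e n ^ 2) atTop (nhds 0) := by
            have := (tendsto_const_nhds (x := (1:ℝ))).sub (he1.pow 2)
            simpa using this
          have := h2.div_const ((1 - c)^2)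
          simpa using this
        apply squeeze_zero' ?_ ?_ hb
        · filter_upwards with n
          nlinarith [ht1 n, ht0 n]
        · filter_upwards with n
          have hk := (hkey n).2 (η n) (hη1 n)
          set w : H := ((1 : H →L[ℂ] H) - star (S n) * T n) (η n) with hw_def
          have hwlow : 1 - c ≤ ‖w‖ := by
            have h3 : ‖(star (S n) * T n) (η n)‖ ≤ c := by
              calc ‖(star (S n) * T n) (η n)‖ ≤ ‖star (S n) * T n‖ * ‖η n‖ :=
                    ContinuousLinearMap.le_opNorm _ _
                _ = ‖star (S n) * T n‖ := by rw [hη1 n, mul_one]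
                _ ≤ ‖star (S n)‖ * ‖T n‖ := norm_mul_le _ _
                _ ≤ c := by
                    rw [norm_star]
                    calc ‖S n‖ * ‖T n‖ ≤ c * 1 := by
                          apply mul_le_mul (hc2 n) (hT n).le (norm_nonneg _) hc0
                      _ = c := mul_one c
            calc 1 - c ≤ ‖η n‖ - ‖(star (S n) * T n) (η n)‖ := by rw [hη1 n]; linarith
              _ ≤ ‖η n - (star (S n) * T n) (η n)‖ := norm_sub_norm_le _ _
              _ = ‖w‖ := by
                  rw [hw_def]
                  simp only [ContinuousLinearMap.sub_apply, ContinuousLinearMap.one_apply]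
          have h6 : (0:ℝ) ≤ 1 - t n ^ 2 := by nlinarith [ht1 n, ht0 n]
          have hcpos : (0:ℝ) < 1 - c := by linarith
          have h7 : (1 - c)^2 ≤ ‖w‖^2 := by nlinarith [norm_nonneg w]
          have hk' : (1 - t n ^ 2) * ‖w‖ ^ 2 ≤ 1 - ‖T n (η n)‖ ^ 2 := hk
          rw [le_div_iff₀ (by positivity)]
          nlinarith [hk', mul_le_mul_of_nonneg_left h7 h6]
    -- conclude
    exact artanh_tendsto ht0 ht1 hmain
end
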